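/- Let N ≥ 1, M > 0, x, y ∈ ℝ^N with all components in [0, M], let 0 < δ < M, let F : K_x → K_y satisfy |d²(p,q) − d²(F(p), F(q))| ≤ 2δ for all p, q ∈ K_x, and let σ, τ : {1,…,N} → {1,…,N} satisfy F(□(n)) ⊆ □(σ(n)) and F(p_n^+(x)), F(p_n^−(x)) ∈ {p_{τ(n)}^+(y), p_{τ(n)}^−(y)} for all n. Then σ and τ are both the identity map on {1,…,N}. -/
import Mathlib

noncomputable def box (M : ℝ) (n : ℕ) : Set (ℝ × ℝ) :=
  Set.Icc (4 * M + 10 * M * (n : ℝ)) (4 * M + 10 * M * (n : ℝ) + 2 * M) ×ˢ Set.Icc (-M) M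

noncomputable def pp {N : ℕ} (M : ℝ) (z : Fin N → ℝ) (n : Fin N) : ℝ × ℝ :=
  (10 * M * ((n : ℕ) : ℝ), z n)

noncomputable def pm {N : ℕ} (M : ℝ) (z : Fin N → ℝ) (n : Fin N) : ℝ × ℝ :=
  (10 * M * ((n : ℕ) : ℝ), -(z n))

noncomputable def Kset {N : ℕ} (M : ℝ) (z : Fin N → ℝ) : Set (ℝ × ℝ) :=
  ⋃ n : Fin N, ({pp M z n, pm M z n} ∪ box M n)

theorem pp_mem {N : ℕ} (M : ℝ) (z : Fin N → ℝ) (n : Fin N) : pp M z n ∈ Kset M z :=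
  Set.mem_iUnion.mpr ⟨n, Or.inl (Set.mem_insert _ _)⟩

theorem pm_mem {N : ℕ} (M : ℝ) (z : Fin N → ℝ) (n : Fin N) : pm M z n ∈ Kset M z :=
  Set.mem_iUnion.mpr ⟨n, Or.inl (Set.mem_insert_of_mem _ rfl)⟩

theorem Kset_compact {N : ℕ} (M : ℝ) (z : Fin N → ℝ) : IsCompact (Kset M z) := by
  apply isCompact_iUnion
  intro n
  exact ((Set.toFinite _).isCompact).union (isCompact_Icc.prod isCompact_Icc)

instance {N : ℕ} (M : ℝ) (z : Fin N → ℝ) : CompactSpace ↥(Kset M z) :=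
  isCompact_iff_compactSpace.mp (Kset_compact M z)

theorem Kset_nonempty {N : ℕ} (hN : 0 < N) (M : ℝ) (z : Fin N → ℝ) : (Kset M z).Nonempty :=
  ⟨pp M z ⟨0, hN⟩, pp_mem M z ⟨0, hN⟩⟩

/-- the combinatorial "gap index" between a point column `a` and a box column `b` -/
def dpz (a b : ℕ) : ℤ := if a ≤ b then (b : ℤ) - a else (a : ℤ) - b - 1

lemma dpz_cases (a b : ℕ) :
    ((a : ℤ) ≤ b ∧ dpz a b = (b : ℤ) - a) ∨ ((b : ℤ) < a ∧ dpz a b = (a : ℤ) - b - 1) := by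
  unfold dpz
  split_ifs with h
  · exact Or.inl ⟨by exact_mod_cast h, rfl⟩
  · exact Or.inr ⟨by omega, rfl⟩

lemma gap {M δ : ℝ} (hM : 0 < M) (hδ0 : 0 < δ) (hδM : δ < M) {i1 i2 : ℤ}
    (h : |10 * M * (i1 : ℝ) - 10 * M * (i2 : ℝ)| ≤ 4 * M + 2 * δ) : i1 = i2 := by
  rw [abs_le] at h
  have h1 : |((i1 - i2 : ℤ) : ℝ)| < 1 := by
    push_cast
    rw [abs_lt]
    constructor <;> nlinarith [h.1, h.2]
  have h2 : |i1 - i2| < 1 := by exact_mod_cast h1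
  rw [abs_lt] at h2
  omega

lemma dist_box_box {M : ℝ} (hM : 0 < M) {a b : ℕ} {p q : ℝ × ℝ}
    (hp : p ∈ box M a) (hq : q ∈ box M b) :
    10 * M * |(a : ℝ) - (b : ℝ)| - 2 * M ≤ dist p q ∧
      dist p q ≤ 10 * M * |(a : ℝ) - (b : ℝ)| + 2 * M := by
  simp only [box, Set.mem_prod, Set.mem_Icc] at hp hq
  obtain ⟨⟨hp1, hp2⟩, hp3, hp4⟩ := hp
  obtain ⟨⟨hq1, hq2⟩, hq3, hq4⟩ := hq
  rw [Prod.dist_eq, Real.dist_eq, Real.dist_eq]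
  have hv : |p.2 - q.2| ≤ 2 * M := abs_le.mpr ⟨by linarith, by linarith⟩
  rcases le_total (a : ℝ) (b : ℝ) with hab | hab
  · have habs : |(a : ℝ) - b| = (b : ℝ) - a := by
      rw [abs_of_nonpos (by linarith)]; ring
    rw [habs]
    have hh : |p.1 - q.1| ≤ 10 * M * ((b : ℝ) - a) + 2 * M := by
      rw [abs_le]
      constructor <;> nlinarith [mul_nonneg hM.le (sub_nonneg.mpr hab)]
    have hh2 : 10 * M * ((b : ℝ) - a) - 2 * M ≤ |p.1 - q.1| := by
      rw [abs_sub_comm]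
      calc 10 * M * ((b : ℝ) - a) - 2 * M ≤ q.1 - p.1 := by linarith
        _ ≤ |q.1 - p.1| := le_abs_self _
    constructor
    · exact le_trans hh2 (le_max_left _ _)
    · exact max_le (by linarith) (by nlinarith [mul_nonneg hM.le (sub_nonneg.mpr hab)])
  · have habs : |(a : ℝ) - b| = (a : ℝ) - b := by
      rw [abs_of_nonneg (by linarith)]
    rw [habs]
    have hh : |p.1 - q.1| ≤ 10 * M * ((a : ℝ) - b) + 2 * M := by
      rw [abs_le]
      constructor <;> nlinarith [mul_nonneg hM.le (sub_nonneg.mpr hab)]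
    have hh2 : 10 * M * ((a : ℝ) - b) - 2 * M ≤ |p.1 - q.1| := by
      calc 10 * M * ((a : ℝ) - b) - 2 * M ≤ p.1 - q.1 := by linarith
        _ ≤ |p.1 - q.1| := le_abs_self _
    constructor
    · exact le_trans hh2 (le_max_left _ _)
    · exact max_le (by linarith) (by nlinarith [mul_nonneg hM.le (sub_nonneg.mpr hab)])

lemma dist_pt_pt {M : ℝ} (hM : 0 < M) {a b : ℕ} {u v : ℝ × ℝ}
    (hu1 : u.1 = 10 * M * (a : ℝ)) (hu2 : |u.2| ≤ M)
    (hv1 : v.1 = 10 * M * (b : ℝ)) (hv2 : |v.2| ≤ M) :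
    10 * M * |(a : ℝ) - (b : ℝ)| ≤ dist u v ∧
      dist u v ≤ 10 * M * |(a : ℝ) - (b : ℝ)| + 2 * M := by
  rw [Prod.dist_eq, Real.dist_eq, Real.dist_eq, hu1, hv1]
  have hh : |10 * M * (a : ℝ) - 10 * M * b| = 10 * M * |(a : ℝ) - b| := by
    rw [show 10 * M * (a : ℝ) - 10 * M * b = (10 * M) * ((a : ℝ) - b) by ring, abs_mul,
      abs_of_pos (by linarith)]
  have hv : |u.2 - v.2| ≤ 2 * M := by
    have := abs_sub_abs_le_abs_sub u.2 v.2
    have h2 := abs_sub u.2 v.2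
    calc |u.2 - v.2| ≤ |u.2| + |v.2| := abs_sub _ _
      _ ≤ 2 * M := by linarith
  constructor
  · rw [← hh]; exact le_max_left _ _
  · refine max_le (by rw [hh]; linarith) ?_
    nlinarith [abs_nonneg ((a : ℝ) - b), mul_nonneg (by linarith : (0:ℝ) ≤ 10 * M) (abs_nonneg ((a:ℝ) - b))]

lemma dist_pt_box {M : ℝ} (hM : 0 < M) {a b : ℕ} {u q : ℝ × ℝ}
    (hu1 : u.1 = 10 * M * (a : ℝ)) (hu2 : |u.2| ≤ M) (hq : q ∈ box M b) :
    10 * M * ((dpz a b : ℤ) : ℝ) + 4 * M ≤ dist u q ∧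
      dist u q ≤ 10 * M * ((dpz a b : ℤ) : ℝ) + 6 * M := by
  simp only [box, Set.mem_prod, Set.mem_Icc] at hq
  obtain ⟨⟨hq1, hq2⟩, hq3, hq4⟩ := hq
  rw [Prod.dist_eq, Real.dist_eq, Real.dist_eq, hu1]
  have hu2' := abs_le.mp hu2
  have hv : |u.2 - q.2| ≤ 2 * M := abs_le.mpr ⟨by linarith [hu2'.1], by linarith [hu2'.2]⟩
  by_cases hab : a ≤ b
  · have hd : ((dpz a b : ℤ) : ℝ) = (b : ℝ) - a := by
      unfold dpz; rw [if_pos hab]; push_cast; ring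
    rw [hd]
    have habr : (a : ℝ) ≤ b := by exact_mod_cast hab
    have hh1 : 10 * M * ((b:ℝ) - a) + 4 * M ≤ |10 * M * (a:ℝ) - q.1| := by
      rw [abs_sub_comm]
      calc 10 * M * ((b:ℝ) - a) + 4 * M ≤ q.1 - 10 * M * a := by linarith
        _ ≤ |q.1 - 10 * M * a| := le_abs_self _
    have hh2 : |10 * M * (a:ℝ) - q.1| ≤ 10 * M * ((b:ℝ) - a) + 6 * M := by
      rw [abs_le]
      constructor <;> nlinarith [mul_nonneg hM.le (sub_nonneg.mpr habr)]
    constructor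
    · exact le_trans hh1 (le_max_left _ _)
    · refine max_le (by linarith) ?_
      nlinarith [mul_nonneg hM.le (sub_nonneg.mpr habr)]
  · have hba : (b : ℤ) < a := by omega
    have hd : ((dpz a b : ℤ) : ℝ) = (a : ℝ) - b - 1 := by
      unfold dpz; rw [if_neg hab]; push_cast; ring
    rw [hd]
    have habr : (b : ℝ) + 1 ≤ a := by exact_mod_cast hba
    have hh1 : 10 * M * ((a:ℝ) - b - 1) + 4 * M ≤ |10 * M * (a:ℝ) - q.1| := by
      calc 10 * M * ((a:ℝ) - b - 1) + 4 * M ≤ 10 * M * a - q.1 := by linarith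
        _ ≤ |10 * M * (a:ℝ) - q.1| := le_abs_self _
    have hh2 : |10 * M * (a:ℝ) - q.1| ≤ 10 * M * ((a:ℝ) - b - 1) + 6 * M := by
      rw [abs_le]
      constructor <;> nlinarith [mul_nonneg hM.le (sub_nonneg.mpr (by linarith : (0:ℝ) ≤ (a:ℝ) - b - 1))]
    constructor
    · exact le_trans hh1 (le_max_left _ _)
    · refine max_le (by linarith) ?_
      nlinarith [mul_nonneg hM.le (sub_nonneg.mpr (by linarith : (0:ℝ) ≤ (a:ℝ) - b - 1))]

lemma rigid {N : ℕ} (f : Fin N → Fin N)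
    (h : ∀ a b : Fin N, |((f a : ℕ) : ℤ) - ((f b : ℕ) : ℤ)| = |((a : ℕ) : ℤ) - ((b : ℕ) : ℤ)|) :
    (∀ n : Fin N, ((f n : ℕ) : ℤ) = ((n : ℕ) : ℤ)) ∨
      (∀ n : Fin N, ((f n : ℕ) : ℤ) = (N : ℤ) - 1 - ((n : ℕ) : ℤ)) := by
  have h' : ∀ a b : Fin N,
      ((f a : ℕ) : ℤ) - ((f b : ℕ) : ℤ) = ((a : ℕ) : ℤ) - ((b : ℕ) : ℤ) ∨
      ((f a : ℕ) : ℤ) - ((f b : ℕ) : ℤ) = ((b : ℕ) : ℤ) - ((a : ℕ) : ℤ) := by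
    intro a b
    have hab := h a b
    rcases abs_cases (((f a : ℕ) : ℤ) - ((f b : ℕ) : ℤ)) with ⟨h1, _⟩ | ⟨h1, _⟩ <;>
      rcases abs_cases (((a : ℕ) : ℤ) - ((b : ℕ) : ℤ)) with ⟨h2, _⟩ | ⟨h2, _⟩ <;> omega
  rcases Nat.lt_or_ge N 2 with hN | hN
  · left
    intro n
    have h1 := n.isLt
    have h2 := (f n).isLt
    omega
  · set z : Fin N := ⟨0, by omega⟩ with hzdef
    set o : Fin N := ⟨1, by omega⟩ with hodef
    set l : Fin N := ⟨N - 1, by omega⟩ with hldef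
    have hz : ((z : ℕ) : ℤ) = 0 := rfl
    have ho : ((o : ℕ) : ℤ) = 1 := rfl
    have hl : ((l : ℕ) : ℤ) = (N : ℤ) - 1 := by
      simp only [hldef]
      omega
    have hfl1 := (f l).isLt
    have hfz := Int.ofNat_nonneg (f z : ℕ)
    have hfz1 := (f z).isLt
    rcases h' o z with hc | hc
    · left
      have key : ∀ a : Fin N, ((f a : ℕ) : ℤ) = ((f z : ℕ) : ℤ) + ((a : ℕ) : ℤ) := by
        intro a
        have h1 := h' a z
        have h2 := h' a o
        omega
      have hlast := key l
      have hz0 : ((f z : ℕ) : ℤ) = 0 := by omega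
      intro n
      have := key n
      omega
    · right
      have key : ∀ a : Fin N, ((f a : ℕ) : ℤ) = ((f z : ℕ) : ℤ) - ((a : ℕ) : ℤ) := by
        intro a
        have h1 := h' a z
        have h2 := h' a o
        omega
      have hlast := key l
      have hz0 : ((f z : ℕ) : ℤ) = (N : ℤ) - 1 := by omega
      intro n
      have := key n
      omega


noncomputable def cornerPt (M : ℝ) (n : ℕ) : ℝ × ℝ := (4 * M + 10 * M * (n : ℝ), 0)

lemma cornerPt_mem_box {M : ℝ} (hM : 0 < M) (n : ℕ) : cornerPt M n ∈ box M n := by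
  simp only [cornerPt, box, Set.mem_prod, Set.mem_Icc]
  refine ⟨⟨le_refl _, by linarith⟩, by linarith, hM.le⟩

lemma cornerPt_mem_Kset {N : ℕ} {M : ℝ} (hM : 0 < M) (z : Fin N → ℝ) (n : Fin N) :
    cornerPt M (n : ℕ) ∈ Kset M z :=
  Set.mem_iUnion.mpr ⟨n, Or.inr (cornerPt_mem_box hM (n : ℕ))⟩

/-- Step 7: σ and τ are both the identity map. -/
theorem step7_sigma_tau_id {N : ℕ} (hN : 0 < N) {M : ℝ} (hM : 0 < M)
    (x y : Fin N → ℝ) (hx : ∀ n, x n ∈ Set.Icc (0 : ℝ) M) (hy : ∀ n, y n ∈ Set.Icc (0 : ℝ) M)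
    {δ : ℝ} (hδ0 : 0 < δ) (hδM : δ < M)
    (F : ↥(Kset M x) → ↥(Kset M y))
    (hF : ∀ p q : ↥(Kset M x), |dist p q - dist (F p) (F q)| ≤ 2 * δ)
    (σ : Fin N → Fin N)
    (hσ : ∀ n : Fin N, ∀ p : ↥(Kset M x),
      (p : ℝ × ℝ) ∈ box M n → (F p : ℝ × ℝ) ∈ box M (σ n))
    (τ : Fin N → Fin N)
    (hτ : ∀ n : Fin N,
      (F ⟨pp M x n, pp_mem M x n⟩ : ℝ × ℝ) ∈ ({pp M y (τ n), pm M y (τ n)} : Set (ℝ × ℝ)) ∧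
      (F ⟨pm M x n, pm_mem M x n⟩ : ℝ × ℝ) ∈ ({pp M y (τ n), pm M y (τ n)} : Set (ℝ × ℝ))) :
    σ = id ∧ τ = id := by
  classical
  -- corner points of boxes, as elements of the subtype
  set C : Fin N → ↥(Kset M x) := fun n => ⟨cornerPt M (n : ℕ), cornerPt_mem_Kset hM x n⟩ with hC
  set P : Fin N → ↥(Kset M x) := fun n => ⟨pp M x n, pp_mem M x n⟩ with hP
  -- spec of the images of the marked points
  have im_spec : ∀ (c : Fin N) (u : ℝ × ℝ), u ∈ ({pp M y c, pm M y c} : Set (ℝ × ℝ)) →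
      u.1 = 10 * M * ((c : ℕ) : ℝ) ∧ |u.2| ≤ M := by
    intro c u hu
    have hyc := hy c
    simp only [Set.mem_Icc] at hyc
    rcases hu with h | h
    · subst h
      refine ⟨rfl, ?_⟩
      show |y c| ≤ M
      exact abs_le.mpr ⟨by linarith [hyc.1], hyc.2⟩
    · rw [Set.mem_singleton_iff] at h
      subst h
      refine ⟨rfl, ?_⟩
      show |-(y c)| ≤ M
      rw [abs_neg]
      exact abs_le.mpr ⟨by linarith [hyc.1], hyc.2⟩
  have hx_abs : ∀ n : Fin N, |x n| ≤ M := by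
    intro n
    have := hx n
    simp only [Set.mem_Icc] at this
    exact abs_le.mpr ⟨by linarith [this.1], this.2⟩
  -- (A) σ preserves gaps between indices
  have hA : ∀ n m : Fin N, |((σ n : ℕ) : ℤ) - ((σ m : ℕ) : ℤ)| = |((n : ℕ) : ℤ) - ((m : ℕ) : ℤ)| := by
    intro n m
    have hb1 := dist_box_box hM (cornerPt_mem_box hM (n : ℕ)) (cornerPt_mem_box hM (m : ℕ))
    have hb2 := dist_box_box hM (hσ n (C n) (cornerPt_mem_box hM (n : ℕ)))
      (hσ m (C m) (cornerPt_mem_box hM (m : ℕ)))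
    have hf := hF (C n) (C m)
    rw [Subtype.dist_eq, Subtype.dist_eq] at hf
    rw [abs_le] at hf
    apply gap hM hδ0 hδM
    push_cast
    rw [abs_le]
    constructor <;> [linarith [hb1.1, hb1.2, hb2.1, hb2.2, hf.1, hf.2];
      linarith [hb1.1, hb1.2, hb2.1, hb2.2, hf.1, hf.2]]
  -- (B) τ preserves gaps between indices
  have hB : ∀ n m : Fin N, |((τ n : ℕ) : ℤ) - ((τ m : ℕ) : ℤ)| = |((n : ℕ) : ℤ) - ((m : ℕ) : ℤ)| := by
    intro n m
    obtain ⟨hu1, hu2⟩ := im_spec (τ n) _ (hτ n).1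
    obtain ⟨hv1, hv2⟩ := im_spec (τ m) _ (hτ m).1
    have hb1 := dist_pt_pt hM (u := pp M x n) (v := pp M x m) rfl (hx_abs n) rfl (hx_abs m)
    have hb2 := dist_pt_pt hM hu1 hu2 hv1 hv2
    have hf := hF (P n) (P m)
    rw [Subtype.dist_eq, Subtype.dist_eq] at hf
    rw [abs_le] at hf
    apply gap hM hδ0 hδM
    push_cast
    rw [abs_le]
    constructor <;> [linarith [hb1.1, hb1.2, hb2.1, hb2.2, hf.1, hf.2];
      linarith [hb1.1, hb1.2, hb2.1, hb2.2, hf.1, hf.2]]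
  -- (C) compatibility between τ and σ
  have hCmix : ∀ n m : Fin N, dpz ((τ n : ℕ)) ((σ m : ℕ)) = dpz ((n : ℕ)) ((m : ℕ)) := by
    intro n m
    obtain ⟨hu1, hu2⟩ := im_spec (τ n) _ (hτ n).1
    have hb1 := dist_pt_box hM (u := pp M x n) rfl (hx_abs n) (cornerPt_mem_box hM (m : ℕ))
    have hb2 := dist_pt_box hM hu1 hu2 (hσ m (C m) (cornerPt_mem_box hM (m : ℕ)))
    have hf := hF (P n) (C m)
    rw [Subtype.dist_eq, Subtype.dist_eq] at hf
    rw [abs_le] at hf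
    apply gap hM hδ0 hδM
    rw [abs_le]
    constructor <;> [linarith [hb1.1, hb1.2, hb2.1, hb2.2, hf.1, hf.2];
      linarith [hb1.1, hb1.2, hb2.1, hb2.2, hf.1, hf.2]]
  -- combinatorial conclusion
  rcases Nat.lt_or_ge N 2 with hN2 | hN2
  · constructor <;> funext n <;> apply Fin.ext <;>
      [have h1 := (σ n).isLt; have h1 := (τ n).isLt] <;> have h2 := n.isLt <;>
      simp only [id_eq] <;> omega
  · have hσc := rigid σ hA
    have hτc := rigid τ hB
    set z : Fin N := ⟨0, by omega⟩ with hzdef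
    set o : Fin N := ⟨1, by omega⟩ with hodef
    have hz : ((z : ℕ) : ℤ) = 0 := rfl
    have ho : ((o : ℕ) : ℤ) = 1 := rfl
    rcases hσc with hσid | hσrefl
    · rcases hτc with hτid | hτrefl
      · constructor <;> funext n <;> apply Fin.ext <;> simp only [id_eq]
        · have := hσid n; omega
        · have := hτid n; omega
      · -- σ = id, τ = refl : contradiction
        exfalso
        have e1 := hCmix z z
        have e2 := hCmix o o
        have v1 := hτrefl z
        have v2 := hτrefl o
        have w1 := hσid z
        have w2 := hσid o
        rcases dpz_cases ((τ z : ℕ)) ((σ z : ℕ)) with ⟨ha, hb⟩ | ⟨ha, hb⟩ <;>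
          rcases dpz_cases ((z : ℕ)) ((z : ℕ)) with ⟨hc, hd⟩ | ⟨hc, hd⟩ <;>
          rcases dpz_cases ((τ o : ℕ)) ((σ o : ℕ)) with ⟨he, hg⟩ | ⟨he, hg⟩ <;>
          rcases dpz_cases ((o : ℕ)) ((o : ℕ)) with ⟨hi, hj⟩ | ⟨hi, hj⟩ <;>
          rw [hb, hd] at e1 <;> rw [hg, hj] at e2 <;> omega
    · rcases hτc with hτid | hτrefl
      · -- σ = refl, τ = id : contradiction
        exfalso
        have e1 := hCmix z z
        have v1 := hτid z
        have w1 := hσrefl z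
        rcases dpz_cases ((τ z : ℕ)) ((σ z : ℕ)) with ⟨ha, hb⟩ | ⟨ha, hb⟩ <;>
          rcases dpz_cases ((z : ℕ)) ((z : ℕ)) with ⟨hc, hd⟩ | ⟨hc, hd⟩ <;>
          rw [hb, hd] at e1 <;> omega
      · -- σ = refl, τ = refl : contradiction
        exfalso
        have e1 := hCmix z o
        have v1 := hτrefl z
        have w1 := hσrefl o
        rcases dpz_cases ((τ z : ℕ)) ((σ o : ℕ)) with ⟨ha, hb⟩ | ⟨ha, hb⟩ <;>
          rcases dpz_cases ((z : ℕ)) ((o : ℕ)) with ⟨hc, hd⟩ | ⟨hc, hd⟩ <;>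
          rw [hb, hd] at e1 <;> omega
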